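/- Let F be a finite field of odd characteristic and let n be odd. For any two nondegenerate symmetric bilinear forms f and f' on F^n, there exist a scalar c ∈ F^× and σ ∈ GL_n(F) such that f'(u,v) = c · f(σ⁻¹u, σ⁻¹v) for all u, v ∈ F^n; consequently the orthogonal groups O(F^n, f) and O(F^n, f') are isomorphic as groups. In other words, for odd n there is only one orthogonal group O(n) over F up to isomorphism. -/

import Mathlib

/-- The group of linear automorphisms of `V` preserving the pairing `f`
(the orthogonal group of `f` when `f` is a bilinear form). -/
def orthB {F V : Type*} [Field F] [AddCommGroup V] [Module F V]
    (f : V → V → F) : Subgroup (V ≃ₗ[F] V) where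
  carrier := {g | ∀ u v, f (g u) (g v) = f u v}
  one_mem' := fun _ _ => rfl
  mul_mem' := by
    intro a b ha hb u v
    exact (ha (b u) (b v)).trans (hb u v)
  inv_mem' := by
    intro a ha u v
    have h := ha (a⁻¹ u) (a⁻¹ v)
    simpa [show (a⁻¹ : V ≃ₗ[F] V) = a.symm from rfl] using h.symm

open Finset Polynomial

namespace OddOrth
variable {F : Type*} [Field F] {n : ℕ}

def Dform (w : Fin n → F) : LinearMap.BilinForm F (Fin n → F) :=
  LinearMap.mk₂ F (fun u v => ∑ i, w i * u i * v i)
    (fun u u' v => by simp [add_mul, mul_add, Finset.sum_add_distrib])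
    (fun c u v => by
      simp only [smul_eq_mul, Pi.smul_apply, Finset.mul_sum]
      exact Finset.sum_congr rfl fun i _ => by ring)
    (fun u v v' => by simp [mul_add, Finset.sum_add_distrib])
    (fun c u v => by
      simp only [smul_eq_mul, Pi.smul_apply, Finset.mul_sum]
      exact Finset.sum_congr rfl fun i _ => by ring)

lemma Dform_apply (w : Fin n → F) (u v : Fin n → F) :
    Dform w u v = ∑ i, w i * u i * v i := rfl

def Cong (f g : LinearMap.BilinForm F (Fin n → F)) : Prop :=
  ∃ σ : (Fin n → F) ≃ₗ[F] (Fin n → F), ∀ u v, g u v = f (σ u) (σ v)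

lemma Cong.refl (f : LinearMap.BilinForm F (Fin n → F)) : Cong f f :=
  ⟨LinearEquiv.refl F _, fun _ _ => rfl⟩

lemma Cong.symm {f g : LinearMap.BilinForm F (Fin n → F)} (h : Cong f g) : Cong g f := by
  obtain ⟨σ, hσ⟩ := h
  exact ⟨σ.symm, fun u v => by rw [hσ]; simp⟩

lemma Cong.trans {f g h : LinearMap.BilinForm F (Fin n → F)}
    (h1 : Cong f g) (h2 : Cong g h) : Cong f h := by
  obtain ⟨σ, hσ⟩ := h1; obtain ⟨τ, hτ⟩ := h2
  exact ⟨τ.trans σ, fun u v => by rw [hτ, hσ]; rfl⟩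

lemma Cong.smul {f g : LinearMap.BilinForm F (Fin n → F)} (c : F) (h : Cong f g) :
    Cong (c • f) (c • g) := by
  obtain ⟨σ, hσ⟩ := h
  exact ⟨σ, fun u v => by simp [hσ u v]⟩

lemma exists_sol [Fintype F] (hodd : Fintype.card F % 2 = 1) (a b : F)
    (ha : a ≠ 0) (hb : b ≠ 0) : ∃ x y : F, a * x ^ 2 + b * y ^ 2 = 1 := by
  have h1 : degree (C a * X ^ 2 : F[X]) = 2 := degree_C_mul_X_pow _ ha
  have hf : degree (C a * X ^ 2 - 1 : F[X]) = 2 := by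
    rw [sub_eq_add_neg, degree_add_eq_left_of_degree_lt, h1]
    rw [h1, degree_neg]
    exact lt_of_le_of_lt degree_one_le (by norm_num)
  have hg : degree (C b * X ^ 2 : F[X]) = 2 := degree_C_mul_X_pow _ hb
  obtain ⟨x, y, h⟩ := FiniteField.exists_root_sum_quadratic hf hg hodd
  refine ⟨x, y, ?_⟩
  simp only [eval_sub, eval_mul, eval_pow, eval_C, eval_X, eval_one] at h
  linear_combination h

def surgeryMap (i j : Fin n) (p q r s : F) : (Fin n → F) →ₗ[F] (Fin n → F) where
  toFun v := fun k => if k = i then p * v i + q * v j else if k = j then r * v i + s * v j else v k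
  map_add' u v := by
    funext k
    by_cases h : k = i <;> by_cases h2 : k = j <;> simp [h, h2] <;> (try split_ifs) <;> ring
  map_smul' c v := by
    funext k
    by_cases h : k = i <;> by_cases h2 : k = j <;> simp [h, h2] <;> (try split_ifs) <;> ring

lemma surgeryMap_apply (i j : Fin n) (p q r s : F) (v : Fin n → F) (k : Fin n) :
    surgeryMap i j p q r s v k =
      if k = i then p * v i + q * v j else if k = j then r * v i + s * v j else v k := rfl

lemma cong_surgery (w : Fin n → F) (i j : Fin n) (hij : i ≠ j)
    (x y : F) (hxy : w i * x ^ 2 + w j * y ^ 2 = 1) :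
    Cong (Dform w) (Dform (Function.update (Function.update w i 1) j (w i * w j))) := by
  classical
  have hji : j ≠ i := hij.symm
  set a := w i with ha
  set b := w j with hb
  refine ⟨LinearEquiv.ofLinear (surgeryMap i j x (-(b * y)) y (a * x))
      (surgeryMap i j (a * x) (b * y) (-y) x) ?_ ?_, ?_⟩
  · apply LinearMap.ext; intro v; funext k
    simp only [LinearMap.comp_apply, LinearMap.id_apply]
    by_cases hki : k = i
    · subst hki
      simp [surgeryMap_apply, hij, hji]
      linear_combination v k * hxy
    · by_cases hkj : k = j
      · subst hkj
        simp [surgeryMap_apply, hij, hji, hki]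
        linear_combination v k * hxy
      · simp [surgeryMap_apply, hki, hkj]
  · apply LinearMap.ext; intro v; funext k
    simp only [LinearMap.comp_apply, LinearMap.id_apply]
    by_cases hki : k = i
    · subst hki
      simp [surgeryMap_apply, hij, hji]
      linear_combination v k * hxy
    · by_cases hkj : k = j
      · subst hkj
        simp [surgeryMap_apply, hij, hji, hki]
        linear_combination v k * hxy
      · simp [surgeryMap_apply, hki, hkj]
  · intro u v
    simp only [LinearEquiv.ofLinear_apply]
    rw [Dform_apply, Dform_apply]
    have split : ∀ g : Fin n → F,
        ∑ k, g k = g i + (g j + ∑ k ∈ (univ.erase i).erase j, g k) := by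
      intro g
      rw [Finset.add_sum_erase _ g (Finset.mem_erase.2 ⟨hji, Finset.mem_univ j⟩),
        Finset.add_sum_erase _ g (Finset.mem_univ i)]
    rw [split, split]
    have hTail : ∑ k ∈ (univ.erase i).erase j,
          Function.update (Function.update w i 1) j (a * b) k * u k * v k
        = ∑ k ∈ (univ.erase i).erase j,
          w k * surgeryMap i j x (-(b * y)) y (a * x) u k
            * surgeryMap i j x (-(b * y)) y (a * x) v k := by
      refine Finset.sum_congr rfl fun k hk => ?_
      rw [Finset.mem_erase, Finset.mem_erase] at hk
      obtain ⟨hkj, hki, -⟩ := hk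
      rw [Function.update_of_ne hkj, Function.update_of_ne hki]
      simp [surgeryMap_apply, hki, hkj]
    rw [hTail]
    have eui : surgeryMap i j x (-(b * y)) y (a * x) u i = x * u i + -(b * y) * u j := by
      simp [surgeryMap_apply]
    have evi : surgeryMap i j x (-(b * y)) y (a * x) v i = x * v i + -(b * y) * v j := by
      simp [surgeryMap_apply]
    have euj : surgeryMap i j x (-(b * y)) y (a * x) u j = y * u i + a * x * u j := by
      simp [surgeryMap_apply, hji]
    have evj : surgeryMap i j x (-(b * y)) y (a * x) v j = y * v i + a * x * v j := by
      simp [surgeryMap_apply, hji]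
    rw [eui, evi, euj, evj, Function.update_self, Function.update_of_ne hij,
      Function.update_self]
    linear_combination (-(u i * v i + a * b * u j * v j)) * hxy

def diagMap (s : Fin n → F) : (Fin n → F) →ₗ[F] (Fin n → F) where
  toFun v := fun k => s k * v k
  map_add' u v := by funext k; simp [mul_add]
  map_smul' c v := by funext k; simp; ring

lemma diagMap_apply (s : Fin n → F) (v : Fin n → F) (k : Fin n) :
    diagMap s v k = s k * v k := rfl

lemma cong_rescale (w s : Fin n → F) (hs : ∀ k, s k ≠ 0) :
    Cong (Dform w) (Dform fun k => w k * s k ^ 2) := by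
  refine ⟨LinearEquiv.ofLinear (diagMap s) (diagMap fun k => (s k)⁻¹) ?_ ?_, ?_⟩
  · apply LinearMap.ext; intro v; funext k
    simp only [LinearMap.comp_apply, LinearMap.id_apply, diagMap_apply]
    rw [← mul_assoc, mul_inv_cancel₀ (hs k), one_mul]
  · apply LinearMap.ext; intro v; funext k
    simp only [LinearMap.comp_apply, LinearMap.id_apply, diagMap_apply]
    rw [← mul_assoc, inv_mul_cancel₀ (hs k), one_mul]
  · intro u v
    simp only [LinearEquiv.ofLinear_apply]
    rw [Dform_apply, Dform_apply]
    exact Finset.sum_congr rfl fun k _ => by rw [diagMap_apply, diagMap_apply]; ring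

def prodTo (w : Fin n → F) (k : ℕ) : F := ∏ i : Fin n, if i.val ≤ k then w i else 1

lemma prodTo_zero (w : Fin n → F) (hn : 0 < n) : prodTo w 0 = w ⟨0, hn⟩ := by
  unfold prodTo
  rw [← Finset.mul_prod_erase _ _ (Finset.mem_univ (⟨0, hn⟩ : Fin n))]
  rw [if_pos (le_refl 0)]
  rw [Finset.prod_eq_one, mul_one]
  intro i hi
  rw [Finset.mem_erase] at hi
  rw [if_neg]
  simpa [Nat.le_zero, Fin.ext_iff] using hi.1

lemma prodTo_succ (w : Fin n → F) (k : ℕ) (hk : k + 1 < n) :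
    prodTo w (k + 1) = prodTo w k * w ⟨k + 1, hk⟩ := by
  unfold prodTo
  rw [← Finset.mul_prod_erase _ _ (Finset.mem_univ (⟨k + 1, hk⟩ : Fin n)),
    ← Finset.mul_prod_erase _ (fun i => if i.val ≤ k then w i else 1)
      (Finset.mem_univ (⟨k + 1, hk⟩ : Fin n))]
  rw [if_pos (le_refl (k + 1)), if_neg (by simp)]
  rw [one_mul, mul_comm]
  congr 1
  refine Finset.prod_congr rfl fun i hi => ?_
  rw [Finset.mem_erase] at hi
  have : i.val ≠ k + 1 := by simpa [Fin.ext_iff] using hi.1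
  by_cases h : i.val ≤ k
  · rw [if_pos h, if_pos (le_trans h (Nat.le_succ k))]
  · rw [if_neg h, if_neg (by omega)]

lemma prodTo_last (w : Fin n → F) (hn : 0 < n) : prodTo w (n - 1) = ∏ i, w i := by
  unfold prodTo
  refine Finset.prod_congr rfl fun i _ => ?_
  rw [if_pos (by omega : i.val ≤ n - 1)]

lemma prodTo_ne_zero (w : Fin n → F) (hw : ∀ i, w i ≠ 0) (k : ℕ) : prodTo w k ≠ 0 := by
  unfold prodTo
  rw [Finset.prod_ne_zero_iff]
  intro i _
  by_cases h : i.val ≤ k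
  · rw [if_pos h]; exact hw i
  · rw [if_neg h]; exact one_ne_zero


lemma cong_reduce [Fintype F] (hcard : Fintype.card F % 2 = 1)
    (w : Fin n → F) (hw : ∀ i, w i ≠ 0) (hn : 0 < n) :
    Cong (Dform w) (Dform fun j : Fin n => if j.val = n - 1 then ∏ i, w i else 1) := by
  classical
  set vfun : ℕ → Fin n → F := fun k j =>
    if j.val < k then 1 else if j.val = k then prodTo w k else w j with hvfun
  have key : ∀ k, k < n → Cong (Dform w) (Dform (vfun k)) := by
    intro k
    induction k with
    | zero =>
      intro hk
      have : vfun 0 = w := by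
        funext j
        simp only [hvfun, Nat.not_lt_zero, if_false]
        by_cases h : j.val = 0
        · rw [if_pos h, prodTo_zero w hn]
          congr 1
          exact Fin.ext h.symm
        · rw [if_neg h]
      rw [this]
      exact Cong.refl _
    | succ k ih =>
      intro hk
      have hk' : k < n := Nat.lt_of_succ_lt hk
      have h1 := ih hk'
      set ik : Fin n := ⟨k, hk'⟩
      set jk : Fin n := ⟨k + 1, hk⟩
      have hij : ik ≠ jk := by simp [ik, jk, Fin.ext_iff]
      have hvi : vfun k ik = prodTo w k := by simp [hvfun, ik]
      have hvj : vfun k jk = w jk := by simp [hvfun, jk]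
      have ha : vfun k ik ≠ 0 := by rw [hvi]; exact prodTo_ne_zero w hw k
      have hb : vfun k jk ≠ 0 := by rw [hvj]; exact hw jk
      obtain ⟨x, y, hxy⟩ := exists_sol hcard _ _ ha hb
      have h2 := cong_surgery (vfun k) ik jk hij x y hxy
      have heq : Function.update (Function.update (vfun k) ik 1) jk (vfun k ik * vfun k jk)
          = vfun (k + 1) := by
        funext j
        by_cases hj : j = jk
        · subst hj
          rw [Function.update_self, hvi, hvj]
          simp [hvfun, jk, prodTo_succ w k hk]
        · rw [Function.update_of_ne hj]
          by_cases hi : j = ik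
          · subst hi
            rw [Function.update_self]
            simp only [hvfun, ik]
            rw [if_pos (by omega)]
          · rw [Function.update_of_ne hi]
            have hj' : j.val ≠ k + 1 := by simpa [Fin.ext_iff, jk] using hj
            have hi' : j.val ≠ k := by simpa [Fin.ext_iff, ik] using hi
            simp only [hvfun]
            by_cases h : j.val < k
            · rw [if_pos h, if_pos (by omega)]
            · rw [if_neg h, if_neg hi', if_neg (by omega), if_neg hj']
      rw [heq] at h2
      exact h1.trans h2
  have hfin := key (n - 1) (by omega)
  have : vfun (n - 1) = fun j : Fin n => if j.val = n - 1 then ∏ i, w i else 1 := by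
    funext j
    have hje : j.val ≤ n - 1 := by omega
    simp only [hvfun]
    by_cases h : j.val = n - 1
    · have hlt : ¬ j.val < n - 1 := by omega
      rw [if_neg hlt, if_pos h, if_pos h, prodTo_last w hn]
    · rw [if_pos (by omega), if_neg h]
  rw [this] at hfin
  exact hfin

lemma smul_Dform (c : F) (w : Fin n → F) :
    c • Dform w = Dform fun k => c * w k := by
  refine LinearMap.ext fun u => LinearMap.ext fun v => ?_
  simp only [LinearMap.smul_apply, smul_eq_mul, Dform_apply, Finset.mul_sum]
  exact Finset.sum_congr rfl fun k _ => by ring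

lemma cong_diag [Invertible (2 : F)] (f : LinearMap.BilinForm F (Fin n → F))
    (hsymm : ∀ u v, f u v = f v u) (hnd : ∀ v, (∀ u, f u v = 0) → v = 0) :
    ∃ w : Fin n → F, (∀ i, w i ≠ 0) ∧ Cong f (Dform w) := by
  have hs : LinearMap.IsSymm f := ⟨fun u v => by simpa using hsymm u v⟩
  obtain ⟨b0, hb0⟩ := LinearMap.BilinForm.exists_orthogonal_basis hs
  have hrank : Module.finrank F (Fin n → F) = n := by
    simp [Module.finrank_pi]
  let b := b0.reindex (finCongr hrank)
  have hbo : ∀ i j : Fin n, i ≠ j → f (b i) (b j) = 0 := by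
    intro i j hij
    simp only [b, Module.Basis.reindex_apply]
    exact hb0 (fun h => hij (by simpa using congrArg (finCongr hrank) h))
  refine ⟨fun i => f (b i) (b i), ?_, ?_⟩
  · intro i hzero
    have hzero' : f (b i) (b i) = 0 := hzero
    have hall : ∀ u, f u (b i) = 0 := by
      intro u
      rw [← b.sum_repr u, map_sum, LinearMap.sum_apply]
      refine Finset.sum_eq_zero fun j _ => ?_
      rw [map_smul, LinearMap.smul_apply, smul_eq_mul]
      by_cases hji : j = i
      · subst hji; rw [hzero', mul_zero]
      · rw [hbo j i hji, mul_zero]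
    exact b.ne_zero i (hnd _ hall)
  · refine ⟨b.equivFun.symm, fun u v => ?_⟩
    rw [Dform_apply, Module.Basis.equivFun_symm_apply, Module.Basis.equivFun_symm_apply, map_sum]
    refine Finset.sum_congr rfl fun j _ => ?_
    rw [map_smul, smul_eq_mul, map_sum, LinearMap.sum_apply]
    rw [Finset.sum_eq_single j]
    · rw [map_smul, LinearMap.smul_apply, smul_eq_mul]; ring
    · intro i _ hij
      rw [map_smul, LinearMap.smul_apply, smul_eq_mul, hbo i j hij, mul_zero]
    · intro h
      exact absurd (Finset.mem_univ j) h

end OddOrth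

lemma mem_orthB {F V : Type*} [Field F] [AddCommGroup V] [Module F V]
    {f : V → V → F} {g : V ≃ₗ[F] V} :
    g ∈ orthB f ↔ ∀ u v, f (g u) (g v) = f u v := Iff.rfl

/-- Over a finite field of odd characteristic and for odd `n`, any two
nondegenerate symmetric bilinear forms on `F^n` differ by a scalar and a change of
basis, and their orthogonal groups are isomorphic. -/
theorem odd_dim_unique_orthogonal_group
    (F : Type*) [Field F] [Fintype F] (hodd : Odd (ringChar F))
    (n : ℕ) (hn : Odd n)
    (f f' : LinearMap.BilinForm F (Fin n → F))
    (hsymm : ∀ u v, f u v = f v u) (hsymm' : ∀ u v, f' u v = f' v u)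
    (hnd : ∀ v, (∀ u, f u v = 0) → v = 0)
    (hnd' : ∀ v, (∀ u, f' u v = 0) → v = 0) :
    (∃ (c : F) (σ : (Fin n → F) ≃ₗ[F] (Fin n → F)), c ≠ 0 ∧
        ∀ u v, f' u v = c * f (σ.symm u) (σ.symm v))
    ∧ Nonempty ((orthB fun u v => f u v) ≃* (orthB fun u v => f' u v)) := by
  classical
  have hF2 : ringChar F ≠ 2 := by
    intro h
    rw [h] at hodd
    exact (Nat.not_odd_iff_even.mpr even_two) hodd
  haveI : Invertible (2 : F) := invertibleOfNonzero (Ring.two_ne_zero hF2)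
  have hcard : Fintype.card F % 2 = 1 := FiniteField.odd_card_of_char_ne_two hF2
  have hn0 : 0 < n := hn.pos
  obtain ⟨w, hw, hfw⟩ := OddOrth.cong_diag f hsymm hnd
  obtain ⟨w', hw', hfw'⟩ := OddOrth.cong_diag f' hsymm' hnd'
  have hdne : (∏ i, w i) ≠ 0 := Finset.prod_ne_zero_iff.mpr fun i _ => hw i
  have hdne' : (∏ i, w' i) ≠ 0 := Finset.prod_ne_zero_iff.mpr fun i _ => hw' i
  set c : F := (∏ i, w' i) * (∏ i, w i)⁻¹ with hc
  have hcne : c ≠ 0 := mul_ne_zero hdne' (inv_ne_zero hdne)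
  obtain ⟨m, hm⟩ := hn
  have h1 : OddOrth.Cong (c • f) (OddOrth.Dform fun k => c * w k) := by
    rw [← OddOrth.smul_Dform]
    exact hfw.smul c
  have h2 : OddOrth.Cong (OddOrth.Dform fun k => c * w k)
      (OddOrth.Dform fun j : Fin n => if j.val = n - 1 then ∏ i, (c * w i) else 1) :=
    OddOrth.cong_reduce hcard _ (fun i => mul_ne_zero hcne (hw i)) hn0
  have hprod : (∏ i, (c * w i)) = (∏ i, w' i) * (c ^ m) ^ 2 := by
    rw [Finset.prod_mul_distrib, Finset.prod_const, Finset.card_univ, Fintype.card_fin]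
    have hcn : c ^ n = c * (c ^ m) ^ 2 := by
      rw [hm]; ring
    rw [hcn, hc]
    field_simp
  have h3 : OddOrth.Cong
      (OddOrth.Dform fun j : Fin n => if j.val = n - 1 then ∏ i, (c * w i) else 1)
      (OddOrth.Dform fun j : Fin n => if j.val = n - 1 then ∏ i, w' i else 1) := by
    have hres := OddOrth.cong_rescale
      (fun j : Fin n => if j.val = n - 1 then ∏ i, (c * w i) else 1)
      (fun j : Fin n => if j.val = n - 1 then (c ^ m)⁻¹ else 1)
      (fun k => by
        split_ifs
        · exact inv_ne_zero (pow_ne_zero m hcne)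
        · exact one_ne_zero)
    have heq : (fun k : Fin n => (if k.val = n - 1 then ∏ i, (c * w i) else 1) *
          (if k.val = n - 1 then (c ^ m)⁻¹ else 1) ^ 2)
        = fun j : Fin n => if j.val = n - 1 then ∏ i, w' i else 1 := by
      funext j
      split_ifs with h
      · rw [hprod]
        have : (c ^ m) ≠ 0 := pow_ne_zero m hcne
        field_simp
      · rw [one_pow, mul_one]
    rw [heq] at hres
    exact hres
  have h4 : OddOrth.Cong f'
      (OddOrth.Dform fun j : Fin n => if j.val = n - 1 then ∏ i, w' i else 1) :=
    hfw'.trans (OddOrth.cong_reduce hcard w' hw' hn0)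
  have hmain : OddOrth.Cong (c • f) f' := ((h1.trans h2).trans h3).trans h4.symm
  obtain ⟨σ, hσ⟩ := hmain
  have key : ∀ u v, f' u v = c * f (σ u) (σ v) := by
    intro u v
    rw [hσ u v]
    simp
  have key' : ∀ u v, f (σ u) (σ v) = c⁻¹ * f' u v := by
    intro u v
    rw [key u v]
    field_simp
  constructor
  · exact ⟨c, σ.symm, hcne, fun u v => by rw [LinearEquiv.symm_symm]; exact key u v⟩
  · have hmap : Subgroup.map ((MulAut.conj σ⁻¹ :
          ((Fin n → F) ≃ₗ[F] (Fin n → F)) ≃* _) : _ →* _)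
        (orthB fun u v => f u v) = orthB fun u v => f' u v := by
      ext g'
      simp only [Subgroup.mem_map]
      constructor
      · rintro ⟨g, hg, rfl⟩
        have hg2 : ∀ u v, f (g u) (g v) = f u v := hg
        intro u v
        show f' ((σ⁻¹ * g * σ) u) ((σ⁻¹ * g * σ) v) = f' u v
        have happ : ∀ z, (σ⁻¹ * g * σ) z = σ.symm (g (σ z)) := fun z => rfl
        rw [happ, happ, key (σ.symm (g (σ u))) (σ.symm (g (σ v))),
          LinearEquiv.apply_symm_apply, LinearEquiv.apply_symm_apply,
          hg2 (σ u) (σ v), ← key u v]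
      · intro hg'
        have hg'2 : ∀ u v, f' (g' u) (g' v) = f' u v := hg'
        refine ⟨MulAut.conj σ g', ?_, by show σ⁻¹ * (σ * g' * σ⁻¹) * σ⁻¹⁻¹ = g'; group⟩
        intro u v
        show f ((σ * g' * σ⁻¹) u) ((σ * g' * σ⁻¹) v) = f u v
        have happ : ∀ z, (σ * g' * σ⁻¹) z = σ (g' (σ.symm z)) := fun z => rfl
        rw [happ, happ, key' (g' (σ.symm u)) (g' (σ.symm v)),
          hg'2 (σ.symm u) (σ.symm v), ← key' (σ.symm u) (σ.symm v),
          LinearEquiv.apply_symm_apply, LinearEquiv.apply_symm_apply]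
    exact ⟨(MulEquiv.subgroupMap (MulAut.conj σ⁻¹) _).trans (MulEquiv.subgroupCongr hmap)⟩
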